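/- Following Theorem 1 of the paper, given real numbers f0, f1, f2 with f0 ≠ 0 and f1 ≠ 0, a constant c_l > 0, and the two-class data below with t₁ ≠ t₂, define for β ∈ ℝ the score means [m_b]_a(β) = −(2 f1/f0) ⟨μ̃_a, μ̃_b⟩ + (f2/f0 − f1²/f0²) t̃_a t̃_b + (2 f2/f0) T̃_ab + (β/c_l)(f1/f0) t_a. Then β₀ = c_l · f0 · (ρ₁ − ρ₂) · Δm / (2 f1 (t₁ − t₂)) is the unique real number β such that [m₁]₁(β) − [m₁]₂(β) = [m₂]₂(β) − [m₂]₁(β). -/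

import Mathlib

open Matrix
open scoped RealInnerProductSpace

/-- Proposition 2 of the paper: `β₀ = c_l f0 (ρ₁ − ρ₂) Δm / (2 f1 (t₁ − t₂))` is the
unique `β` balancing the average score resolutions of the two classes, i.e. such that
`[m₁]₁(β) − [m₁]₂(β) = [m₂]₂(β) − [m₂]₁(β)`. -/
theorem beta_zero_balances_classes
    (p : ℕ) (hp : 1 ≤ p)
    (f0 f1 f2 : ℝ) (hf0 : f0 ≠ 0) (hf1 : f1 ≠ 0) (cl : ℝ) (hcl : 0 < cl)
    (μ₁ μ₂ : EuclideanSpace ℝ (Fin p))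
    (C₁ C₂ : Matrix (Fin p) (Fin p) ℝ) (hC₁ : C₁.IsSymm) (hC₂ : C₂.IsSymm)
    (ρ₁ ρ₂ : ℝ) (hρ₁ : 0 < ρ₁) (hρ₂ : 0 < ρ₂) (hρ : ρ₁ + ρ₂ = 1)
    (μt : Fin 2 → EuclideanSpace ℝ (Fin p))
    (hμt0 : μt 0 = μ₁ - (ρ₁ • μ₁ + ρ₂ • μ₂))
    (hμt1 : μt 1 = μ₂ - (ρ₁ • μ₁ + ρ₂ • μ₂))
    (Ct : Fin 2 → Matrix (Fin p) (Fin p) ℝ)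
    (hCt0 : Ct 0 = C₁ - (ρ₁ • C₁ + ρ₂ • C₂))
    (hCt1 : Ct 1 = C₂ - (ρ₁ • C₁ + ρ₂ • C₂))
    (tt : Fin 2 → ℝ) (htt : ∀ a, tt a = (Ct a).trace / Real.sqrt p)
    (Tt : Fin 2 → Fin 2 → ℝ) (hTt : ∀ a b, Tt a b = (Ct a * Ct b).trace / p)
    (t : Fin 2 → ℝ) (ht : t 0 - t 1 = (C₁.trace - C₂.trace) / Real.sqrt p)
    (htne : t 0 ≠ t 1)
    (Δm : ℝ)
    (hΔm : Δm = -(2 * f1 / f0) * ‖μ₁ - μ₂‖ ^ 2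
        + (f2 / f0 - f1 ^ 2 / f0 ^ 2) * ((C₁.trace - C₂.trace) / Real.sqrt p) ^ 2
        + (2 * f2 / f0) * ((C₁ - C₂) * (C₁ - C₂)).trace / p)
    (m : ℝ → Fin 2 → Fin 2 → ℝ)
    (hm : ∀ β b a, m β b a = -(2 * f1 / f0) * ⟪μt a, μt b⟫
        + (f2 / f0 - f1 ^ 2 / f0 ^ 2) * tt a * tt b
        + (2 * f2 / f0) * Tt a b + (β / cl) * (f1 / f0) * t a) :
    ∀ β : ℝ, (m β 0 0 - m β 0 1 = m β 1 1 - m β 1 0) ↔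
      β = cl * f0 * (ρ₁ - ρ₂) * Δm / (2 * f1 * (t 0 - t 1)) := by
  intro β
  have hppos : (0 : ℝ) < p := by exact_mod_cast hp
  have hpn : (p : ℝ) ≠ 0 := hppos.ne'
  have hsp : Real.sqrt p ≠ 0 := (Real.sqrt_pos.mpr hppos).ne'
  have hρ12 : ρ₁ = 1 - ρ₂ := by linarith
  have hμ0 : μt 0 = ρ₂ • (μ₁ - μ₂) := by rw [hμt0, hρ12]; module
  have hμ1 : μt 1 = (-ρ₁) • (μ₁ - μ₂) := by rw [hμt1, hρ12]; module
  have hC0 : Ct 0 = ρ₂ • (C₁ - C₂) := by rw [hCt0, hρ12]; module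
  have hC1 : Ct 1 = (-ρ₁) • (C₁ - C₂) := by rw [hCt1, hρ12]; module
  have i00 : ⟪μt 0, μt 0⟫ = ρ₂ ^ 2 * ‖μ₁ - μ₂‖ ^ 2 := by
    rw [hμ0, real_inner_smul_left, real_inner_smul_right, real_inner_self_eq_norm_sq]; ring
  have i01 : ⟪μt 0, μt 1⟫ = -(ρ₂ * ρ₁) * ‖μ₁ - μ₂‖ ^ 2 := by
    rw [hμ0, hμ1, real_inner_smul_left, real_inner_smul_right, real_inner_self_eq_norm_sq]; ring
  have i10 : ⟪μt 1, μt 0⟫ = -(ρ₂ * ρ₁) * ‖μ₁ - μ₂‖ ^ 2 := by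
    rw [hμ0, hμ1, real_inner_smul_left, real_inner_smul_right, real_inner_self_eq_norm_sq]; ring
  have i11 : ⟪μt 1, μt 1⟫ = ρ₁ ^ 2 * ‖μ₁ - μ₂‖ ^ 2 := by
    rw [hμ1, real_inner_smul_left, real_inner_smul_right, real_inner_self_eq_norm_sq]; ring
  have e0 : tt 0 = ρ₂ * ((C₁.trace - C₂.trace) / Real.sqrt p) := by
    rw [htt, hC0, trace_smul, trace_sub, smul_eq_mul]; ring
  have e1 : tt 1 = (-ρ₁) * ((C₁.trace - C₂.trace) / Real.sqrt p) := by
    rw [htt, hC1, trace_smul, trace_sub, smul_eq_mul]; ring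
  have T00 : Tt 0 0 = ρ₂ ^ 2 * (((C₁ - C₂) * (C₁ - C₂)).trace / p) := by
    rw [hTt, hC0, smul_mul_assoc, mul_smul_comm, trace_smul, trace_smul, smul_eq_mul, smul_eq_mul]
    ring
  have T01 : Tt 0 1 = -(ρ₂ * ρ₁) * (((C₁ - C₂) * (C₁ - C₂)).trace / p) := by
    rw [hTt, hC0, hC1, smul_mul_assoc, mul_smul_comm, trace_smul, trace_smul, smul_eq_mul,
      smul_eq_mul]
    ring
  have T10 : Tt 1 0 = -(ρ₂ * ρ₁) * (((C₁ - C₂) * (C₁ - C₂)).trace / p) := by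
    rw [hTt, hC0, hC1, smul_mul_assoc, mul_smul_comm, trace_smul, trace_smul, smul_eq_mul,
      smul_eq_mul]
    ring
  have T11 : Tt 1 1 = ρ₁ ^ 2 * (((C₁ - C₂) * (C₁ - C₂)).trace / p) := by
    rw [hTt, hC1, smul_mul_assoc, mul_smul_comm, trace_smul, trace_smul, smul_eq_mul, smul_eq_mul]
    ring
  have ht' : t 0 = t 1 + (C₁.trace - C₂.trace) / Real.sqrt p := by rw [← ht]; ring
  have hS : (C₁.trace - C₂.trace) / Real.sqrt p ≠ 0 := by
    rw [← ht]; exact sub_ne_zero.mpr htne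
  have key : m β 0 0 - m β 0 1 - (m β 1 1 - m β 1 0)
      = (2 * f1 * (t 0 - t 1) / (f0 * cl))
        * (β - cl * f0 * (ρ₁ - ρ₂) * Δm / (2 * f1 * (t 0 - t 1))) := by
    rw [hm β 0 0, hm β 0 1, hm β 1 1, hm β 1 0, i00, i01, i10, i11, e0, e1,
      T00, T01, T10, T11, hΔm, ht']
    rw [show t 1 + (C₁.trace - C₂.trace) / Real.sqrt p - t 1
      = (C₁.trace - C₂.trace) / Real.sqrt p from by ring]
    set S := (C₁.trace - C₂.trace) / Real.sqrt p with hSdef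
    set T := ((C₁ - C₂) * (C₁ - C₂)).trace with hT
    set N := ‖μ₁ - μ₂‖ with hN
    set pp := (p : ℝ) with hpp
    clear_value S T N pp
    have hcl' : cl ≠ 0 := hcl.ne'
    clear hm htt hTt hΔm ht ht' hμt0 hμt1 hCt0 hCt1 hμ0 hμ1 hC0 hC1 i00 i01 i10 i11
      e0 e1 T00 T01 T10 T11 hC₁ hC₂ hSdef hT hN hpp hρ12 hρ₁ hρ₂ hcl hp hppos htne hsp
      μt Ct tt Tt Δm m μ₁ μ₂ C₁ C₂
    field_simp
    linear_combination (ρ₁ - ρ₂) * (2*f1*f0*N^2*pp*cl + f1^2*S^2*pp*cl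
      - f0*f2*S^2*pp*cl - 2*f0*f2*T*cl) * hρ
  have hk : 2 * f1 * (t 0 - t 1) / (f0 * cl) ≠ 0 :=
    div_ne_zero (mul_ne_zero (mul_ne_zero two_ne_zero hf1) (sub_ne_zero.mpr htne))
      (mul_ne_zero hf0 hcl.ne')
  constructor
  · intro h
    have h0 := sub_eq_zero_of_eq h
    rw [key] at h0
    exact sub_eq_zero.mp ((mul_eq_zero.mp h0).resolve_left hk)
  · intro h
    have h1 : m β 0 0 - m β 0 1 - (m β 1 1 - m β 1 0) = 0 := by
      rw [key, h, sub_self, mul_zero]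
    exact sub_eq_zero.mp h1
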